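/- Let u : ℝ → ℝ be the pseudo-peakon profile u(x) = (1/2) e^{-|x|}(1+|x|) and let û(ξ) = ∫_ℝ e^{-iξx} u(x) dx denote its Fourier transform. For a real number s, the weighted integral ∫_ℝ (1+ξ²)^s |û(ξ)|² dξ is finite if and only if s < 7/2. In particular, u belongs to the Sobolev space H^s(ℝ) precisely for s < 7/2. -/

import Mathlib

open MeasureTheory

/-- The RZQ pseudo-peakon profile `u(x) = (1/2) e^{-|x|} (1 + |x|)`. -/
noncomputable def pseudoPeakon (x : ℝ) : ℝ := (1 / 2) * Real.exp (-|x|) * (1 + |x|)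

/-- The Fourier transform `û(ξ) = ∫_ℝ e^{-iξx} u(x) dx` of the pseudo-peakon profile. -/
noncomputable def pseudoPeakonHat (ξ : ℝ) : ℂ :=
  ∫ x : ℝ, Complex.exp (-(Complex.I * ξ * x)) * (pseudoPeakon x : ℂ)

section Aux
open Set Filter Complex

lemma tendsto_mul_atTop_aux {r : ℝ} (hr : 0 < r) : Tendsto (fun x : ℝ => r * x) atTop atTop :=
  Tendsto.const_mul_atTop hr tendsto_id

lemma tendsto_exp_neg_aux {r : ℝ} (hr : 0 < r) :
    Tendsto (fun x : ℝ => Real.exp (-(r * x))) atTop (nhds 0) :=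
  Real.tendsto_exp_atBot.comp (tendsto_neg_atTop_atBot.comp (tendsto_mul_atTop_aux hr))

lemma tendsto_mul_exp_neg_aux {r : ℝ} (hr : 0 < r) :
    Tendsto (fun x : ℝ => x * Real.exp (-(r * x))) atTop (nhds 0) := by
  have h := (Real.tendsto_pow_mul_exp_neg_atTop_nhds_zero 1).comp (tendsto_mul_atTop_aux hr)
  have := h.const_mul (1 / r)
  rw [mul_zero] at this
  refine this.congr fun x => ?_
  simp only [Function.comp]
  field_simp

lemma norm_cexp_aux (c : ℂ) (x : ℝ) : ‖Complex.exp (-(c*x))‖ = Real.exp (-(c.re*x)) := by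
  rw [Complex.norm_exp]
  norm_num [Complex.mul_re]

lemma integrableOn_cexp_aux (c : ℂ) (hc : 0 < c.re) :
    IntegrableOn (fun x : ℝ => Complex.exp (-(c*x))) (Ioi 0) := by
  refine Integrable.mono' ((exp_neg_integrableOn_Ioi 0 hc)) ?_ ?_
  · exact (Continuous.cexp (by fun_prop)).aestronglyMeasurable
  · exact ae_of_all _ fun x => by rw [norm_cexp_aux]; simp [neg_mul]

lemma integrableOn_mul_cexp_aux (c : ℂ) (hc : 0 < c.re) :
    IntegrableOn (fun x : ℝ => (x:ℂ) * Complex.exp (-(c*x))) (Ioi 0) := by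
  have hg : IntegrableOn (fun x : ℝ => x * Real.exp (-(c.re * x))) (Ioi 0) := by
    refine (integrableOn_rpow_mul_exp_neg_mul_rpow (p := 1) (s := 1) (by norm_num) one_pos hc).congr_fun
      (fun x hx => ?_) measurableSet_Ioi
    simp [Real.rpow_one, neg_mul]
  refine Integrable.mono' hg ?_ ?_
  · exact (Continuous.mul Complex.continuous_ofReal (Continuous.cexp (by fun_prop))).aestronglyMeasurable
  · refine (ae_restrict_iff' measurableSet_Ioi).2 (ae_of_all _ fun x hx => ?_)
    rw [norm_mul, norm_cexp_aux]
    simp only [Complex.norm_real, Real.norm_eq_abs]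
    rw [abs_of_pos hx]


lemma hasDerivAt_cexp_aux (c : ℂ) (x : ℝ) :
    HasDerivAt (fun y : ℝ => Complex.exp (-(c*y))) (-c * Complex.exp (-(c*x))) x := by
  have h : HasDerivAt (fun z : ℂ => Complex.exp (-(c*z))) (-c * Complex.exp (-(c*x))) (x:ℂ) := by
    have h1 : HasDerivAt (fun z : ℂ => -(c*z)) (-c) (x:ℂ) := by
      simpa using ((hasDerivAt_id (x:ℂ)).const_mul (-c))
    simpa [mul_comm] using h1.cexp
  exact h.comp_ofReal

lemma integral_cexp_aux (c : ℂ) (hc : 0 < c.re) :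
    ∫ x : ℝ in Ioi 0, Complex.exp (-(c*x)) = 1/c := by
  have hc0 : c ≠ 0 := fun h => by simp [h] at hc
  have := integral_Ioi_of_hasDerivAt_of_tendsto' (a := 0) (m := 0)
    (f := fun x : ℝ => -(1/c) * Complex.exp (-(c*x)))
    (f' := fun x : ℝ => Complex.exp (-(c*x)))
    (fun x _ => by
      have := ((hasDerivAt_cexp_aux c x).const_mul (-(1/c)))
      convert this using 1
      · rfl
      field_simp)
    (integrableOn_cexp_aux c hc)
    ?_
  · rw [this]; simp
  · rw [show (0:ℂ) = -(1/c) * 0 by ring]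
    refine Tendsto.const_mul _ ?_
    rw [tendsto_zero_iff_norm_tendsto_zero]
    refine (tendsto_exp_neg_aux hc).congr fun x => ?_
    rw [norm_cexp_aux]

lemma integral_mul_cexp_aux (c : ℂ) (hc : 0 < c.re) :
    ∫ x : ℝ in Ioi 0, (x:ℂ) * Complex.exp (-(c*x)) = 1/c^2 := by
  have hc0 : c ≠ 0 := fun h => by simp [h] at hc
  have := integral_Ioi_of_hasDerivAt_of_tendsto' (a := 0) (m := 0)
    (f := fun x : ℝ => -((x:ℂ)/c + 1/c^2) * Complex.exp (-(c*x)))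
    (f' := fun x : ℝ => (x:ℂ) * Complex.exp (-(c*x)))
    (fun x _ => by
      have h1 : HasDerivAt (fun y : ℝ => -((y:ℂ)/c + 1/c^2)) (-(1/c)) x := by
        have : HasDerivAt (fun y : ℝ => (y:ℂ)) 1 x := Complex.ofRealCLM.hasDerivAt
        exact ((this.div_const c).add_const (1/c^2)).neg
      have := h1.mul (hasDerivAt_cexp_aux c x)
      convert this using 1
      · rfl
      · rfl
      field_simp
      ring)
    (integrableOn_mul_cexp_aux c hc)
    ?_
  · rw [this]; simp
  · rw [tendsto_zero_iff_norm_tendsto_zero]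
    have hb : Tendsto (fun x : ℝ => (x * ‖1/c‖ + ‖1/(c:ℂ)^2‖) * Real.exp (-(c.re*x))) atTop (nhds 0) := by
      have h1 := (tendsto_mul_exp_neg_aux hc).const_mul ‖(1:ℂ)/c‖
      have h2 := (tendsto_exp_neg_aux hc).const_mul ‖1/(c:ℂ)^2‖
      have := h1.add h2
      simp only [mul_zero, add_zero] at this
      refine this.congr fun x => ?_
      ring
    refine squeeze_zero_norm' ?_ hb
    filter_upwards [eventually_ge_atTop (0:ℝ)] with x hx
    rw [norm_norm, norm_mul, norm_cexp_aux, norm_neg]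
    refine mul_le_mul_of_nonneg_right ((norm_add_le _ _).trans ?_) (Real.exp_pos _).le
    gcongr
    rw [div_eq_mul_one_div, norm_mul, Complex.norm_real, Real.norm_eq_abs]
    rw [_root_.abs_of_nonneg hx]

lemma key_integrable (c : ℂ) (hc : 0 < c.re) :
    IntegrableOn (fun x : ℝ => (1/2:ℂ) * ((1:ℂ)+x) * Complex.exp (-(c*x))) (Ioi 0) := by
  have h : IntegrableOn
      (fun x : ℝ => (1/2:ℂ) * (Complex.exp (-(c*x)) + (x:ℂ) * Complex.exp (-(c*x)))) (Ioi 0) :=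
    ((integrableOn_cexp_aux c hc).add (integrableOn_mul_cexp_aux c hc)).const_mul _
  exact h.congr_fun (fun x _ => by ring) measurableSet_Ioi

lemma key_integral (c : ℂ) (hc : 0 < c.re) :
    ∫ x : ℝ in Ioi 0, (1/2:ℂ) * ((1:ℂ)+x) * Complex.exp (-(c*x)) = (1/2) * (1/c + 1/c^2) := by
  have : ∀ x : ℝ, (1/2:ℂ) * ((1:ℂ)+x) * Complex.exp (-(c*x))
      = (1/2:ℂ) * (Complex.exp (-(c*x)) + (x:ℂ) * Complex.exp (-(c*x))) := fun x => by ring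
  simp_rw [this]
  rw [integral_const_mul, integral_add (integrableOn_cexp_aux c hc) (integrableOn_mul_cexp_aux c hc),
    integral_cexp_aux c hc, integral_mul_cexp_aux c hc]

lemma eq_on_Ioi (ξ : ℝ) (x : ℝ) (hx : 0 < x) :
    Complex.exp (-(Complex.I * ξ * x)) * (pseudoPeakon x : ℂ)
      = (1/2:ℂ) * ((1:ℂ)+x) * Complex.exp (-((1 + Complex.I*ξ)*x)) := by
  rw [pseudoPeakon, abs_of_pos hx]
  push_cast
  rw [show -((1 + Complex.I*ξ)*(x:ℂ)) = -(Complex.I * ξ * (x:ℂ)) + -(x:ℂ) by ring,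
    Complex.exp_add]
  ring

lemma alg_aux (c : ℂ) (hc0 : c ≠ 0) (h2 : (2:ℂ) - c ≠ 0) :
    (1/2:ℂ)*(1/(2-c) + 1/(2-c)^2) + (1/2:ℂ)*(1/c + 1/c^2) = 2/(c*(2-c))^2 := by
  have hd : c^3*32 - c^4*48 + (c^5*24 - c^6*4) ≠ 0 := by
    have h3 : c^3*32 - c^4*48 + (c^5*24 - c^6*4) = (4*c^3)*(2-c)^3 := by ring
    rw [h3]
    exact mul_ne_zero (mul_ne_zero (by norm_num) (pow_ne_zero _ hc0)) (pow_ne_zero _ h2)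
  field_simp
  ring

lemma pseudoPeakonHat_eq (ξ : ℝ) :
    pseudoPeakonHat ξ = 2 / ((1:ℂ) + (ξ:ℂ)^2)^2 := by
  set c : ℂ := 1 + Complex.I*ξ with hc_def
  set c' : ℂ := 1 - Complex.I*ξ with hc'_def
  have hc : 0 < c.re := by simp [hc_def]
  have hc' : 0 < c'.re := by simp [hc'_def]
  set f : ℝ → ℂ := fun x => Complex.exp (-(Complex.I * ξ * x)) * (pseudoPeakon x : ℂ) with hf
  have hneg : ∀ x : ℝ, 0 < x → f (-x) = (1/2:ℂ) * ((1:ℂ)+x) * Complex.exp (-(c'*x)) := by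
    intro x hx
    show Complex.exp (-(Complex.I * ξ * ((-x : ℝ):ℂ))) * (pseudoPeakon (-x) : ℂ) = _
    rw [pseudoPeakon, abs_neg, abs_of_pos hx]
    push_cast
    rw [show -(c' * (x:ℂ)) = -(Complex.I * ↑ξ * -(x:ℂ)) + -(x:ℂ) by rw [hc'_def]; ring,
      Complex.exp_add]
    ring
  have hIoi_int : IntegrableOn f (Ioi 0) :=
    (key_integrable c hc).congr_fun (fun x hx => (eq_on_Ioi ξ x hx).symm) measurableSet_Ioi
  have hIoi : ∫ x in Ioi 0, f x = (1/2) * (1/c + 1/c^2) := by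
    rw [← key_integral c hc]
    exact setIntegral_congr_fun measurableSet_Ioi (fun x hx => eq_on_Ioi ξ x hx)
  have hnegIoi_int : IntegrableOn (fun x => f (-x)) (Ioi 0) :=
    (key_integrable c' hc').congr_fun (fun x hx => (hneg x hx).symm) measurableSet_Ioi
  have hIic_int : IntegrableOn f (Iic 0) := by
    have m : MeasurableEmbedding fun x : ℝ => -x := (Homeomorph.neg ℝ).measurableEmbedding
    have h2 : IntegrableOn f (Iic 0) (Measure.map (fun x => -x) volume) := by
      rw [m.integrableOn_map_iff]
      have : (fun x : ℝ => -x) ⁻¹' Iic 0 = Ici 0 := by ext y; simp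
      rw [this]
      exact (integrableOn_Ici_iff_integrableOn_Ioi).mpr hnegIoi_int
    rwa [Measure.map_neg_eq_self] at h2
  have hIic : ∫ x in Iic 0, f x = (1/2) * (1/c' + 1/c'^2) := by
    have h0 : ∫ x in Iic (0:ℝ), f x = ∫ x in Ioi (0:ℝ), f (-x) := by
      rw [integral_comp_neg_Ioi, neg_zero]
    rw [h0, ← key_integral c' hc']
    exact setIntegral_congr_fun measurableSet_Ioi (fun x hx => hneg x hx)
  have hsplit : pseudoPeakonHat ξ = (∫ x in Iic 0, f x) + ∫ x in Ioi 0, f x := by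
    rw [pseudoPeakonHat, ← intervalIntegral.integral_Iic_add_Ioi hIic_int hIoi_int]
  rw [hsplit, hIic, hIoi]
  have hcc : c * c' = 1 + (ξ:ℂ)^2 := by
    rw [hc_def, hc'_def]; ring_nf; rw [Complex.I_sq]; ring
  have hc0 : c ≠ 0 := fun h => by rw [h] at hc; simp at hc
  have hc'0 : c' ≠ 0 := fun h => by rw [h] at hc'; simp at hc'
  have hs : c' = 2 - c := by rw [hc_def, hc'_def]; ring
  have h2 : (2:ℂ) - c ≠ 0 := hs ▸ hc'0
  rw [← hcc, hs]
  exact alg_aux c hc0 h2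

end Aux

section Main
open Set Filter
lemma norm_hat (ξ : ℝ) : ‖pseudoPeakonHat ξ‖ = 2 / (1 + ξ^2)^2 := by
  rw [pseudoPeakonHat_eq,
    show (2:ℂ) / ((1:ℂ) + (ξ:ℂ)^2)^2 = ((2 / (1+ξ^2)^2 : ℝ) : ℂ) by push_cast; ring,
    Complex.norm_real, Real.norm_eq_abs, abs_of_nonneg (by positivity)]

lemma integrand_eq (s ξ : ℝ) :
    (1 + ξ^2)^s * ‖pseudoPeakonHat ξ‖^2 = 4 * (1 + ξ^2)^(s - 4) := by
  have hA : (0:ℝ) < 1 + ξ^2 := by positivity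
  rw [norm_hat, Real.rpow_sub hA, div_pow,
    show ((1:ℝ)+ξ^2)^(4:ℝ) = ((1+ξ^2)^2)^2 by
      rw [show (4:ℝ) = ((4:ℕ):ℝ) by norm_num, Real.rpow_natCast]; ring]
  field_simp
  ring

/-- The weighted integral `∫_ℝ (1+ξ²)^s |û(ξ)|² dξ` is finite if and only if `s < 7/2`;
i.e. the pseudo-peakon belongs to `H^s(ℝ)` precisely for `s < 7/2`. -/
theorem pseudoPeakon_mem_Hs_iff (s : ℝ) :
    (∫⁻ ξ : ℝ, ENNReal.ofReal ((1 + ξ ^ 2) ^ s * ‖pseudoPeakonHat ξ‖ ^ 2)) < ⊤ ↔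
    s < 7 / 2 := by
  have hpt : (∫⁻ ξ : ℝ, ENNReal.ofReal ((1 + ξ ^ 2) ^ s * ‖pseudoPeakonHat ξ‖ ^ 2))
      = ∫⁻ ξ : ℝ, ENNReal.ofReal (4 * (1 + ξ^2)^(s - 4)) :=
    lintegral_congr fun ξ => by rw [integrand_eq]
  rw [hpt]
  set t : ℝ := s - 4 with ht_def
  constructor
  · intro hfin
    by_contra hs
    push_neg at hs
    have ht : -(1/2 : ℝ) ≤ t := by rw [ht_def]; linarith
    set k : ℝ := min 1 (2 ^ t) with hk_def
    have hk : 0 < k := lt_min one_pos (Real.rpow_pos_of_pos two_pos t)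
    have hlb : ∀ ξ : ℝ, ξ ∈ Ioi (1:ℝ) → 4 * k * ξ ^ (2*t) ≤ 4 * (1 + ξ^2)^t := by
      intro ξ hξ
      rw [mem_Ioi] at hξ
      have hξ0 : (0:ℝ) < ξ := by linarith
      have hA : (0:ℝ) < 1 + ξ^2 := by positivity
      have hsq : ξ ^ (2*t) = (ξ^2) ^ t := by
        rw [show ξ^2 = ξ^(2:ℝ) by rw [show (2:ℝ) = ((2:ℕ):ℝ) by norm_num, Real.rpow_natCast],
          ← Real.rpow_mul hξ0.le]
      rcases le_or_gt 0 t with h0 | h0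
      · have : (ξ^2:ℝ)^t ≤ (1+ξ^2)^t := Real.rpow_le_rpow (by positivity) (by linarith) h0
        have hk1 : k ≤ 1 := min_le_left _ _
        rw [hsq]
        nlinarith [Real.rpow_nonneg (by positivity : (0:ℝ) ≤ ξ^2) t]
      · have hle2 : (1:ℝ) + ξ^2 ≤ 2 * ξ^2 := by nlinarith
        have h2 : ((2:ℝ) * ξ^2)^t ≤ (1+ξ^2)^t := Real.rpow_le_rpow_of_nonpos hA hle2 h0.le
        have h3 : ((2:ℝ) * ξ^2)^t = 2^t * (ξ^2)^t := Real.mul_rpow (by norm_num) (by positivity)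
        have hk2 : k ≤ 2^t := min_le_right _ _
        rw [hsq]
        nlinarith [Real.rpow_nonneg (by positivity : (0:ℝ) ≤ ξ^2) t,
          Real.rpow_pos_of_pos two_pos t]
    have hle : (∫⁻ ξ : ℝ in Ioi 1, ENNReal.ofReal (4 * k * ξ ^ (2*t)))
        ≤ ∫⁻ ξ : ℝ, ENNReal.ofReal (4 * (1 + ξ^2)^t) :=
      le_trans (setLIntegral_mono' measurableSet_Ioi fun ξ hξ =>
        ENNReal.ofReal_le_ofReal (hlb ξ hξ)) (setLIntegral_le_lintegral _ _)
    have hmeas : Measurable fun ξ : ℝ => 4 * k * ξ ^ (2*t) := by measurability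
    have hF_int : IntegrableOn (fun ξ : ℝ => 4 * k * ξ ^ (2*t)) (Ioi 1) := by
      refine ⟨hmeas.aestronglyMeasurable, ?_⟩
      rw [hasFiniteIntegral_iff_ofReal ((ae_restrict_iff' measurableSet_Ioi).2
        (ae_of_all _ fun ξ hξ => by
          have : (0:ℝ) < ξ := lt_trans one_pos hξ
          positivity))]
      exact lt_of_le_of_lt hle hfin
    have hrpow_int : IntegrableOn (fun ξ : ℝ => ξ ^ (2*t)) (Ioi 1) := by
      have h : IntegrableOn (fun ξ : ℝ => (1/(4*k)) * (4 * k * ξ ^ (2*t))) (Ioi 1) :=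
        hF_int.const_mul _
      refine h.congr_fun (fun ξ _ => ?_) measurableSet_Ioi
      field_simp
    have := (integrableOn_Ioi_rpow_iff one_pos).mp hrpow_int
    linarith
  · intro hs
    have hr : (Module.finrank ℝ ℝ : ℝ) < 8 - 2*s := by
      rw [Module.finrank_self]; push_cast; linarith
    have hint : Integrable (fun ξ : ℝ => 4 * (1 + ξ^2)^t) := by
      have h := (integrable_rpow_neg_one_add_norm_sq (E := ℝ) (μ := volume) hr).const_mul 4
      refine h.congr (ae_of_all _ fun ξ => ?_)
      show 4 * (1 + ‖ξ‖ ^ 2) ^ (-(8 - 2 * s) / 2) = 4 * (1 + ξ ^ 2) ^ t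
      rw [Real.norm_eq_abs, sq_abs, show -(8-2*s)/2 = t by rw [ht_def]; ring]
    exact (hasFiniteIntegral_iff_ofReal (ae_of_all _ fun ξ => by positivity)).mp
      hint.hasFiniteIntegral

end Main
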